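/- Let n ≥ 1 be an integer and let h : {0,1,…,n} → ℝ satisfy h(0) = 0, h(n) = 1, and n·h(k) = k·h(k+1) + (n−k)·h(k−1) for every integer k with 1 ≤ k ≤ n−1. Then for every integer i with 1 ≤ i ≤ n, h(i) − h(i−1) = (1/2)^(n−1) · C(n−1, i−1), where C(a,b) denotes the binomial coefficient. -/

import Mathlib

theorem triadic_winner_distribution
    (n : ℕ) (hn : 1 ≤ n) (h : ℕ → ℝ)
    (h0 : h 0 = 0) (hN : h n = 1)
    (hrec : ∀ k : ℕ, 1 ≤ k → k ≤ n - 1 →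
      (n : ℝ) * h k = (k : ℝ) * h (k + 1) + ((n : ℝ) - (k : ℝ)) * h (k - 1)) :
    ∀ i : ℕ, 1 ≤ i → i ≤ n →
      h i - h (i - 1) = (1 / 2 : ℝ) ^ (n - 1) * ((n - 1).choose (i - 1) : ℝ) := by
  -- key: differences proportional to binomial coefficients
  have key : ∀ i : ℕ, 1 ≤ i → i ≤ n →
      h i - h (i - 1) = (h 1 - h 0) * ((n - 1).choose (i - 1) : ℝ) := by
    intro i hi
    induction i, hi using Nat.le_induction with
    | base => intro _; simp
    | succ k hk ih =>
      intro hkn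
      have hk1 : k ≤ n - 1 := Nat.le_sub_one_of_lt hkn
      have hkn' : k ≤ n := le_of_lt hkn
      have ihk := ih hkn'
      have hrk := hrec k hk hk1
      obtain ⟨m, rfl⟩ : ∃ m, k = m + 1 := ⟨k - 1, (Nat.succ_pred_eq_of_pos hk).symm⟩
      -- binomial identity
      have hmn : m ≤ n - 1 := le_trans (Nat.le_succ m) hk1
      have hnat : (n - 1).choose (m + 1) * (m + 1) = (n - 1).choose m * (n - 1 - m) :=
        Nat.choose_succ_right_eq (n - 1) m
      have hcast : ((n : ℝ) - (m + 1)) = ((n - 1 - m : ℕ) : ℝ) := by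
        have : ((n - 1 - m : ℕ) : ℝ) = ((n : ℝ) - 1) - m := by
          push_cast [Nat.cast_sub hmn, Nat.cast_sub hn]
          ring
        rw [this]; ring
      have hid : ((m : ℝ) + 1) * ((n - 1).choose (m + 1) : ℝ)
          = ((n : ℝ) - (m + 1)) * ((n - 1).choose m : ℝ) := by
        rw [hcast]
        have := congrArg (Nat.cast : ℕ → ℝ) hnat
        push_cast at this
        linarith
      -- from recurrence
      have hstep : ((m : ℝ) + 1) * (h (m + 1 + 1) - h (m + 1))
          = ((n : ℝ) - (m + 1)) * (h (m + 1) - h m) := by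
        simp only [Nat.succ_sub_one] at hrk
        push_cast at hrk
        linarith
      have hne : ((m : ℝ) + 1) ≠ 0 := by positivity
      have ihk' : h (m + 1) - h m = (h 1 - h 0) * ((n - 1).choose m : ℝ) := by
        simpa using ihk
      have hgoal : ((m : ℝ) + 1) * (h (m + 1 + 1) - h (m + 1))
          = ((m : ℝ) + 1) * ((h 1 - h 0) * ((n - 1).choose (m + 1) : ℝ)) := by
        rw [hstep, ihk']
        linear_combination (h 0 - h 1) * hid
      have := mul_left_cancel₀ hne hgoal
      simpa using this
  -- telescoping sum to find h 1 - h 0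
  have htel : ∑ i ∈ Finset.range n, (h (i + 1) - h i) = 1 := by
    rw [Finset.sum_range_sub, h0, hN, sub_zero]
  have hsum : ∑ i ∈ Finset.range n, (h (i + 1) - h i)
      = (h 1 - h 0) * (2 : ℝ) ^ (n - 1) := by
    have : ∀ i ∈ Finset.range n, h (i + 1) - h i
        = (h 1 - h 0) * ((n - 1).choose i : ℝ) := by
      intro i hi
      have := key (i + 1) (Nat.le_add_left 1 i) (Finset.mem_range.mp hi)
      simpa using this
    rw [Finset.sum_congr rfl this, ← Finset.mul_sum]
    congr 1
    have : ∑ i ∈ Finset.range n, ((n - 1).choose i : ℝ)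
        = ((∑ i ∈ Finset.range n, (n - 1).choose i : ℕ) : ℝ) := by push_cast; ring
    rw [this]
    obtain ⟨m, rfl⟩ : ∃ m, n = m + 1 := ⟨n - 1, (Nat.succ_pred_eq_of_pos hn).symm⟩
    simp only [Nat.add_sub_cancel]
    rw [Nat.sum_range_choose]
    push_cast; ring
  have hd1 : h 1 - h 0 = (1 / 2 : ℝ) ^ (n - 1) := by
    have h2 : ((2 : ℝ) ^ (n - 1)) ≠ 0 := by positivity
    rw [hsum] at htel
    field_simp
    rw [one_div_pow, eq_div_iff h2]; linarith [htel]
  intro i hi hin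
  rw [key i hi hin, hd1]
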